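/- Let D be a hereditary and inflatable graph class. Then for every graph class C: C ≤_sg D if and only if there exist k ∈ ℕ and a k²-ary boolean function f such that every graph in C has an (H,f)-representation for some H ∈ D (with no restriction on the number of vertices of H). -/

import Mathlib

/-- Directed graphs with possible self-loops on vertex set `Fin n`,
with Bool-valued adjacency. -/
abbrev BGraph (n : ℕ) := Fin n → Fin n → Bool

/-- A graph class: for each number of vertices, a set of graphs. -/
abbrev GraphClass := ∀ n : ℕ, Set (BGraph n)

/-- A `k²`-ary boolean function, taking a `k × k` boolean matrix. -/
abbrev MatFun (k : ℕ) := (Fin k → Fin k → Bool) → Bool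

/-- `G` has an `(H,f)`-representation: there is `ℓ : V(G) → V(H)^k` such that
distinct `u, v` are adjacent in `G` iff `f` applied to the `k × k` matrix of
adjacency indicators `(ℓ(u)ᵢ, ℓ(v)ⱼ) ∈ E(H)` is `true`. -/
def HFRep {n m k : ℕ} (G : BGraph n) (H : BGraph m) (f : MatFun k) : Prop :=
  ∃ ℓ : Fin n → Fin k → Fin m,
    ∀ u v : Fin n, u ≠ v → G u v = f fun i j => H (ℓ u i) (ℓ v j)

/-- `C ≤_sg D` via constants `c, k` and boolean function `f`: every `n`-vertex
graph of `C` has an `(H,f)`-representation for some `H ∈ D` on `n^c` vertices. -/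
def SGvia (C D : GraphClass) (c k : ℕ) (f : MatFun k) : Prop :=
  ∀ n : ℕ, ∀ G ∈ C n, ∃ H ∈ D (n ^ c), HFRep G H f

/-- The subgraph reduction `C ≤_sg D`. -/
def ReducesSG (C D : GraphClass) : Prop :=
  ∃ (c k : ℕ) (f : MatFun k), SGvia C D c k f

/-- A graph class is hereditary if it is closed under induced subgraphs. -/
def Hered (D : GraphClass) : Prop :=
  ∀ (m n : ℕ) (e : Fin m ↪ Fin n), ∀ G ∈ D n,
    (fun u v => G (e u) (e v)) ∈ D m

/-- A graph class is inflatable if every `n`-vertex member embeds as an induced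
subgraph into an `m`-vertex member, for every `m > n`. -/
def Inflatable (D : GraphClass) : Prop :=
  ∀ n : ℕ, ∀ G ∈ D n, ∀ m > n, ∃ H ∈ D m, ∃ e : Fin n ↪ Fin m,
    ∀ u v, G u v = H (e u) (e v)

/-- For a hereditary and inflatable graph class `D`: `C ≤_sg D` iff there are
`k` and a `k²`-ary boolean function `f` such that every graph in `C` has an
`(H,f)`-representation for some `H ∈ D` (of arbitrary size). -/
theorem stmt_17 (D : GraphClass) (hher : Hered D) (hinf : Inflatable D)
    (C : GraphClass) :
    ReducesSG C D ↔
      ∃ (k : ℕ) (f : MatFun k), ∀ n : ℕ, ∀ G ∈ C n,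
        ∃ (m : ℕ), ∃ H ∈ D m, HFRep G H f := by
  constructor
  · rintro ⟨c, k, f, h⟩
    refine ⟨k, f, fun n G hG => ?_⟩
    obtain ⟨H, hH, hrep⟩ := h n G hG
    exact ⟨n ^ c, H, hH, hrep⟩
  · rintro ⟨k, f, h⟩
    refine ⟨k + 1, k, f, fun n G hG => ?_⟩
    obtain ⟨m, H, hH, ℓ, hℓ⟩ := h n G hG
    set N := n ^ (k + 1) with hNdef
    -- small cases n ≤ 1 : HFRep is vacuous
    by_cases hn1 : n ≤ 1
    · -- produce any member of D N (N = n here since n ≤ 1)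
      have hNn : N = n := by
        interval_cases n <;> simp [hNdef]
      have hexists : ∃ H' : BGraph N, H' ∈ D N := by
        rcases Nat.lt_or_ge m N with hmN | hmN
        · -- m < N : inflate
          obtain ⟨H', hH', e, he⟩ := hinf m H hH N hmN
          exact ⟨H', hH'⟩
        · -- N ≤ m : restrict
          have e : Fin N ↪ Fin m := (Fin.castLEEmb hmN)
          exact ⟨_, hher N m e H hH⟩
      obtain ⟨H', hH'⟩ := hexists
      refine ⟨H', hH', ?_⟩
      refine ⟨fun u i => (hNn ▸ u : Fin N), fun u v huv => absurd (Fin.ext (by omega)) huv⟩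
    push_neg at hn1
    have hn2 : 2 ≤ n := hn1
    have hNge : n * k ≤ N := by
      have h1 : k ≤ 2 ^ k := (Nat.lt_two_pow_self (n := k)).le
      have h2 : 2 ^ k ≤ n ^ k := Nat.pow_le_pow_left hn2 k
      calc n * k ≤ n * n ^ k := Nat.mul_le_mul_left n (h1.trans h2)
        _ = N := by rw [hNdef, pow_succ, mul_comm]
    rcases lt_trichotomy m N with hmN | hmN | hmN
    · -- inflate
      obtain ⟨H', hH', e, he⟩ := hinf m H hH N hmN
      refine ⟨H', hH', fun u i => e (ℓ u i), fun u v huv => ?_⟩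
      rw [hℓ u v huv]
      congr 1
      funext i j
      exact he (ℓ u i) (ℓ v j)
    · subst hmN
      exact ⟨H, hH, ℓ, hℓ⟩
    · -- shrink
      set S : Finset (Fin m) :=
        Finset.image (fun p : Fin n × Fin k => ℓ p.1 p.2) Finset.univ with hS
      have hScard : S.card ≤ N := by
        calc S.card ≤ (Finset.univ : Finset (Fin n × Fin k)).card :=
              Finset.card_image_le
          _ = n * k := by simp
          _ ≤ N := hNge
      obtain ⟨T, hST, hTcard⟩ := Finset.exists_superset_card_eq hScard
        (by simpa using hmN.le)
      have iso := T.orderIsoOfFin hTcard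
      set e : Fin N ↪ Fin m :=
        iso.toEquiv.toEmbedding.trans (Function.Embedding.subtype _) with hedef
      refine ⟨fun u v => H (e u) (e v), hher N m e H hH, ?_⟩
      have hmem : ∀ (u : Fin n) (i : Fin k), ℓ u i ∈ T := by
        intro u i
        exact hST (Finset.mem_image.2 ⟨(u, i), Finset.mem_univ _, rfl⟩)
      refine ⟨fun u i => iso.symm ⟨ℓ u i, hmem u i⟩, fun u v huv => ?_⟩
      rw [hℓ u v huv]
      congr 1
      funext i j
      have he : ∀ (u : Fin n) (i' : Fin k), e (iso.symm ⟨ℓ u i', hmem u i'⟩) = ℓ u i' := by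
        intro u i'
        simp [hedef]
      show H (ℓ u i) (ℓ v j) =
        H (e (iso.symm ⟨ℓ u i, hmem u i⟩)) (e (iso.symm ⟨ℓ v j, hmem v j⟩))
      rw [he u i, he v j]
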